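/- arXiv:2205.14500 — 7 statements merged into one kernel-verified Lean document; each statement's English description precedes it below -/
import Mathlib

section
/- Theorem 1 (integrality of the flow formulation). For every feasible flow assignment of a layered decision-diagram skeleton, every variable w⁻_u, w⁺_u (u ∈ V^I) and every variable z⁻_{uv}, z⁺_{uv} (u ∈ V^I, v ∈ δ⁺(u)) takes a value in {0,1}, even though only the λ, d and y variables are required to be binary. -/
/-- A layered decision-diagram skeleton: depth `D ≥ 1`, pairwise-disjoint nonempty
layers `V 0, …, V (D-1)` of internal nodes with `V 0 = {r}` (the root), and a
nonempty set `C` of terminal nodes disjoint from every layer. -/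
structure Skeleton (Node : Type) [DecidableEq Node] where
  D : ℕ
  hD : 1 ≤ D
  V : ℕ → Finset Node
  C : Finset Node
  r : Node
  hV0 : V 0 = {r}
  hVne : ∀ l, l < D → (V l).Nonempty
  hVdisj : ∀ l l', l < D → l' < D → l ≠ l' → Disjoint (V l) (V l')
  hCne : C.Nonempty
  hVC : ∀ l, l < D → Disjoint (V l) C

/-- The successor set `δ⁺(u)` of a node in layer `l`:
`V (l+1) ∪ C` if `l < D - 1`, and `C` if `l = D - 1`. -/
def Skeleton.succ {Node : Type} [DecidableEq Node] (S : Skeleton Node) (l : ℕ) :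
    Finset Node :=
  if l < S.D - 1 then S.V (l + 1) ∪ S.C else S.C

/-- A feasible flow assignment for a single sample on a layered decision-diagram
skeleton: nonnegative flows `wm, wp, zm, zp`, binary `lam, d, ym, yp` (with
`d r = 1`), subject to constraints (C1)–(C5). -/
structure FeasibleFlow {Node : Type} [DecidableEq Node] (S : Skeleton Node) where
  wm : Node → ℝ
  wp : Node → ℝ
  zm : Node → Node → ℝ
  zp : Node → Node → ℝ
  lam : ℕ → ℝ
  d : Node → ℝ
  ym : Node → Node → ℝ
  yp : Node → Node → ℝ
  wm_nonneg : ∀ u, 0 ≤ wm u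
  wp_nonneg : ∀ u, 0 ≤ wp u
  zm_nonneg : ∀ u v, 0 ≤ zm u v
  zp_nonneg : ∀ u v, 0 ≤ zp u v
  lam_bin : ∀ l, l < S.D → lam l = 0 ∨ lam l = 1
  d_bin : ∀ l, l < S.D → ∀ u ∈ S.V l, d u = 0 ∨ d u = 1
  d_root : d S.r = 1
  ym_bin : ∀ l, l < S.D → ∀ u ∈ S.V l, ∀ v ∈ S.succ l, ym u v = 0 ∨ ym u v = 1
  yp_bin : ∀ l, l < S.D → ∀ u ∈ S.V l, ∀ v ∈ S.succ l, yp u v = 0 ∨ yp u v = 1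
  c1_root : wp S.r + wm S.r = 1
  c1 : ∀ l, 1 ≤ l → l < S.D → ∀ v ∈ S.V l,
      wp v + wm v = ∑ u ∈ S.V (l - 1), (zp u v + zm u v)
  c2m : ∀ l, l < S.D → ∀ u ∈ S.V l, wm u = ∑ v ∈ S.succ l, zm u v
  c2p : ∀ l, l < S.D → ∀ u ∈ S.V l, wp u = ∑ v ∈ S.succ l, zp u v
  c3m : ∀ l, l < S.D → ∑ u ∈ S.V l, wm u ≤ 1 - lam l
  c3p : ∀ l, l < S.D → ∑ u ∈ S.V l, wp u ≤ lam l
  c4p : ∀ l, l < S.D → ∀ u ∈ S.V l, d u = ∑ v ∈ S.succ l, yp u v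
  c4m : ∀ l, l < S.D → ∀ u ∈ S.V l, d u = ∑ v ∈ S.succ l, ym u v
  c5p : ∀ l, l < S.D → ∀ u ∈ S.V l, ∀ v ∈ S.succ l, zp u v ≤ yp u v
  c5m : ∀ l, l < S.D → ∀ u ∈ S.V l, ∀ v ∈ S.succ l, zm u v ≤ ym u v


private lemma sum_zero_or_one_le {α : Type*} (s : Finset α) (f : α → ℝ)
    (h0 : ∀ i ∈ s, 0 ≤ f i) (h : ∀ i ∈ s, f i = 0 ∨ 1 ≤ f i) :
    (∑ i ∈ s, f i) = 0 ∨ 1 ≤ ∑ i ∈ s, f i := by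
  by_cases hall : ∀ i ∈ s, f i = 0
  · exact Or.inl (Finset.sum_eq_zero hall)
  · push_neg at hall
    obtain ⟨i, hi, hne⟩ := hall
    have h1 : 1 ≤ f i := (h i hi).resolve_left hne
    exact Or.inr (h1.trans (Finset.single_le_sum h0 hi))

/-- If `z ≤ y` pointwise, `y` is binary with binary sum, and `Σ z ∈ {0,1}`,
then each `z` is binary. -/
private lemma aux_z {α : Type*} [DecidableEq α] (s : Finset α) (z y : α → ℝ)
    (hz0 : ∀ v ∈ s, 0 ≤ z v) (hzy : ∀ v ∈ s, z v ≤ y v)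
    (hy : ∀ v ∈ s, y v = 0 ∨ y v = 1)
    (hd : (∑ v ∈ s, y v) = 0 ∨ (∑ v ∈ s, y v) = 1)
    (hw : (∑ v ∈ s, z v) = 0 ∨ (∑ v ∈ s, z v) = 1) :
    ∀ v ∈ s, z v = 0 ∨ z v = 1 := by
  intro v hv
  rcases hw with hw | hw
  · exact Or.inl ((Finset.sum_eq_zero_iff_of_nonneg hz0).mp hw v hv)
  · have hzsum_le : ∑ w ∈ s, z w ≤ ∑ w ∈ s, y w := Finset.sum_le_sum hzy
    have hysum : ∑ w ∈ s, y w = 1 := by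
      rcases hd with h | h
      · rw [h] at hzsum_le; rw [hw] at hzsum_le; linarith
      · exact h
    rcases hy v hv with hy0 | hy1
    · left
      have h1 := hzy v hv
      have h2 := hz0 v hv
      rw [hy0] at h1
      linarith
    · right
      have hzs : z v + ∑ w ∈ s.erase v, z w = 1 := by
        rw [Finset.add_sum_erase _ _ hv]; exact hw
      have hys : y v + ∑ w ∈ s.erase v, y w = 1 := by
        rw [Finset.add_sum_erase _ _ hv]; exact hysum
      have hle : ∑ w ∈ s.erase v, z w ≤ ∑ w ∈ s.erase v, y w :=
        Finset.sum_le_sum (fun w hw' => hzy w (Finset.mem_of_mem_erase hw'))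
      have hzv := hzy v hv
      linarith

/-- Layer exclusivity: in every layer, all `w⁻` vanish or all `w⁺` vanish. -/
private lemma excl {Node : Type} [DecidableEq Node]
    (S : Skeleton Node) (F : FeasibleFlow S) (l : ℕ) (hl : l < S.D) :
    (∀ u ∈ S.V l, F.wm u = 0) ∨ (∀ u ∈ S.V l, F.wp u = 0) := by
  rcases F.lam_bin l hl with h | h
  · right
    have h1 := F.c3p l hl
    rw [h] at h1
    have h2 : ∑ u ∈ S.V l, F.wp u = 0 :=
      le_antisymm h1 (Finset.sum_nonneg fun u _ => F.wp_nonneg u)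
    exact fun u hu =>
      (Finset.sum_eq_zero_iff_of_nonneg (fun u _ => F.wp_nonneg u)).mp h2 u hu
  · left
    have h1 := F.c3m l hl
    rw [h] at h1
    have h2 : ∑ u ∈ S.V l, F.wm u = 0 :=
      le_antisymm (by linarith) (Finset.sum_nonneg fun u _ => F.wm_nonneg u)
    exact fun u hu =>
      (Finset.sum_eq_zero_iff_of_nonneg (fun u _ => F.wm_nonneg u)).mp h2 u hu

/-- z-integrality at a node, given w-integrality there. -/
private lemma zint {Node : Type} [DecidableEq Node]
    (S : Skeleton Node) (F : FeasibleFlow S) (l : ℕ) (hl : l < S.D)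
    (u : Node) (hu : u ∈ S.V l)
    (hwm : F.wm u = 0 ∨ F.wm u = 1) (hwp : F.wp u = 0 ∨ F.wp u = 1) :
    ∀ v ∈ S.succ l, (F.zm u v = 0 ∨ F.zm u v = 1) ∧ (F.zp u v = 0 ∨ F.zp u v = 1) := by
  intro v hv
  constructor
  · exact aux_z (S.succ l) (F.zm u) (F.ym u)
      (fun v _ => F.zm_nonneg u v) (F.c5m l hl u hu) (F.ym_bin l hl u hu)
      (by rw [← F.c4m l hl u hu]; exact F.d_bin l hl u hu)
      (by rw [← F.c2m l hl u hu]; exact hwm) v hv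
  · exact aux_z (S.succ l) (F.zp u) (F.yp u)
      (fun v _ => F.zp_nonneg u v) (F.c5p l hl u hu) (F.yp_bin l hl u hu)
      (by rw [← F.c4p l hl u hu]; exact F.d_bin l hl u hu)
      (by rw [← F.c2p l hl u hu]; exact hwp) v hv

/-- Induction invariant: all `w` in layer `l` are binary and the layer total is ≤ 1. -/
private lemma key {Node : Type} [DecidableEq Node]
    (S : Skeleton Node) (F : FeasibleFlow S) :
    ∀ l, l < S.D →
      (∀ u ∈ S.V l, (F.wm u = 0 ∨ F.wm u = 1) ∧ (F.wp u = 0 ∨ F.wp u = 1)) ∧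
      (∑ u ∈ S.V l, (F.wp u + F.wm u)) ≤ 1 := by
  intro l
  induction l with
  | zero =>
    intro hl
    constructor
    · intro u hu
      rw [S.hV0, Finset.mem_singleton] at hu
      subst hu
      rcases excl S F 0 hl with h | h
      · have hm : F.wm S.r = 0 := h S.r (by rw [S.hV0]; exact Finset.mem_singleton_self _)
        have hp : F.wp S.r = 1 := by have := F.c1_root; linarith
        exact ⟨Or.inl hm, Or.inr hp⟩
      · have hp : F.wp S.r = 0 := h S.r (by rw [S.hV0]; exact Finset.mem_singleton_self _)
        have hm : F.wm S.r = 1 := by have := F.c1_root; linarith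
        exact ⟨Or.inr hm, Or.inl hp⟩
    · rw [S.hV0, Finset.sum_singleton]
      have := F.c1_root
      linarith
  | succ l ih =>
    intro hl1
    have hl : l < S.D := Nat.lt_of_succ_lt hl1
    obtain ⟨ihw, ihsum⟩ := ih hl
    have hsucc : S.succ l = S.V (l + 1) ∪ S.C := by
      unfold Skeleton.succ
      rw [if_pos (by omega)]
    have hsub : S.V (l + 1) ⊆ S.succ l := by
      rw [hsucc]; exact Finset.subset_union_left
    have hc1 : ∀ v ∈ S.V (l + 1),
        F.wp v + F.wm v = ∑ u ∈ S.V l, (F.zp u v + F.zm u v) := by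
      intro v hv
      have := F.c1 (l + 1) (Nat.le_add_left 1 l) hl1 v hv
      simpa using this
    have hsum : ∑ v ∈ S.V (l + 1), (F.wp v + F.wm v) ≤ 1 := by
      calc ∑ v ∈ S.V (l + 1), (F.wp v + F.wm v)
          = ∑ v ∈ S.V (l + 1), ∑ u ∈ S.V l, (F.zp u v + F.zm u v) :=
            Finset.sum_congr rfl hc1
        _ = ∑ u ∈ S.V l, ∑ v ∈ S.V (l + 1), (F.zp u v + F.zm u v) :=
            Finset.sum_comm
        _ ≤ ∑ u ∈ S.V l, ∑ v ∈ S.succ l, (F.zp u v + F.zm u v) :=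
            Finset.sum_le_sum (fun u _ =>
              Finset.sum_le_sum_of_subset_of_nonneg hsub
                (fun v _ _ => add_nonneg (F.zp_nonneg u v) (F.zm_nonneg u v)))
        _ = ∑ u ∈ S.V l, (F.wp u + F.wm u) := by
            refine Finset.sum_congr rfl (fun u hu => ?_)
            rw [Finset.sum_add_distrib, ← F.c2p l hl u hu, ← F.c2m l hl u hu]
        _ ≤ 1 := ihsum
    refine ⟨?_, hsum⟩
    intro v hv
    have htbin : F.wp v + F.wm v = 0 ∨ F.wp v + F.wm v = 1 := by
      have hzterm : ∀ u ∈ S.V l, F.zp u v + F.zm u v = 0 ∨ 1 ≤ F.zp u v + F.zm u v := by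
        intro u hu
        obtain ⟨hzm, hzp⟩ := zint S F l hl u hu (ihw u hu).1 (ihw u hu).2 v (hsub hv)
        have h1 := F.zm_nonneg u v
        have h2 := F.zp_nonneg u v
        rcases hzm with h | h <;> rcases hzp with h' | h' <;>
          simp [h, h'] <;> linarith
      have h01 := sum_zero_or_one_le (S.V l) (fun u => F.zp u v + F.zm u v)
        (fun u _ => add_nonneg (F.zp_nonneg u v) (F.zm_nonneg u v)) hzterm
      rw [← hc1 v hv] at h01
      have hle1 : F.wp v + F.wm v ≤ 1 := by
        have h2 : F.wp v + F.wm v ≤ ∑ w ∈ S.V (l + 1), (F.wp w + F.wm w) :=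
          Finset.single_le_sum
            (fun w _ => add_nonneg (F.wp_nonneg w) (F.wm_nonneg w)) hv
        linarith
      rcases h01 with h | h
      · exact Or.inl h
      · exact Or.inr (le_antisymm hle1 h)
    rcases excl S F (l + 1) hl1 with h | h
    · have hm := h v hv
      have hpn := F.wp_nonneg v
      constructor
      · exact Or.inl hm
      · rcases htbin with ht | ht
        · left; linarith
        · right; linarith
    · have hp := h v hv
      have hmn := F.wm_nonneg v
      constructor
      · rcases htbin with ht | ht
        · left; linarith
        · right; linarith
      · exact Or.inl hp

/-- **Theorem 1 (integrality of the flow formulation).**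
For every feasible flow assignment of a layered decision-diagram skeleton, every
variable `w⁻_u`, `w⁺_u` (`u ∈ V^I`) and every variable `z⁻_{uv}`, `z⁺_{uv}`
(`u ∈ V^I`, `v ∈ δ⁺(u)`) takes a value in `{0,1}`. -/
theorem flow_integrality {Node : Type} [DecidableEq Node]
    (S : Skeleton Node) (F : FeasibleFlow S) :
    ∀ l, l < S.D → ∀ u ∈ S.V l,
      (F.wm u = 0 ∨ F.wm u = 1) ∧ (F.wp u = 0 ∨ F.wp u = 1) ∧
      ∀ v ∈ S.succ l,
        (F.zm u v = 0 ∨ F.zm u v = 1) ∧ (F.zp u v = 0 ∨ F.zp u v = 1) := by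
  intro l hl u hu
  obtain ⟨ihw, _⟩ := key S F l hl
  obtain ⟨hwm, hwp⟩ := ihw u hu
  exact ⟨hwm, hwp, zint S F l hl u hu hwm hwp⟩
end

section
/- Layer-uniqueness invariant (inductive claim in the proof of Theorem 1). For every feasible flow assignment of a layered decision-diagram skeleton and every layer l ∈ {0, …, D−1}: every node u ∈ V_l satisfies w⁺_u + w⁻_u ∈ {0,1}, and there is at most one node ū ∈ V_l with w⁺_ū + w⁻_ū = 1, while all other nodes u ∈ V_l satisfy w⁺_u + w⁻_u = 0. -/
/-- **Layer-uniqueness invariant.** For every feasible flow assignment and every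
layer `l < D`: every node `u ∈ V l` satisfies `w⁺_u + w⁻_u ∈ {0,1}`, and there is
at most one node `ū ∈ V l` with `w⁺_ū + w⁻_ū = 1`, while all other nodes of the
layer satisfy `w⁺_u + w⁻_u = 0`. -/
theorem layer_uniqueness {Node : Type} [DecidableEq Node]
    (S : Skeleton Node) (F : FeasibleFlow S) :
    ∀ l, l < S.D →
      (∀ u ∈ S.V l, F.wp u + F.wm u = 0 ∨ F.wp u + F.wm u = 1) ∧
      (∀ ubar ∈ S.V l, F.wp ubar + F.wm ubar = 1 →
        ∀ u ∈ S.V l, u ≠ ubar → F.wp u + F.wm u = 0) := by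
  -- auxiliary: uniqueness from sum ≤ 1 and nonnegativity
  have uniq : ∀ (s : Finset Node) (f : Node → ℝ), (∀ u ∈ s, 0 ≤ f u) →
      (∑ u ∈ s, f u ≤ 1) → ∀ ubar ∈ s, f ubar = 1 → ∀ u ∈ s, u ≠ ubar → f u = 0 := by
    intro s f hnn hs ubar hub h1 u hu hne
    have hpair : ({u, ubar} : Finset Node) ⊆ s := by
      intro x hx
      simp only [Finset.mem_insert, Finset.mem_singleton] at hx
      rcases hx with rfl | rfl <;> assumption
    have h2 : ∑ x ∈ ({u, ubar} : Finset Node), f x ≤ ∑ x ∈ s, f x :=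
      Finset.sum_le_sum_of_subset_of_nonneg hpair (fun x hx _ => hnn x hx)
    rw [Finset.sum_pair hne] at h2
    have := hnn u hu
    linarith
  have key : ∀ l, l < S.D →
      (∀ u ∈ S.V l, F.wp u + F.wm u = 0 ∨ F.wp u + F.wm u = 1) ∧
      (∑ u ∈ S.V l, (F.wp u + F.wm u)) ≤ 1 := by
    intro l
    induction l with
    | zero =>
      intro _
      constructor
      · intro u hu
        rw [S.hV0, Finset.mem_singleton] at hu
        subst hu
        right; linarith [F.c1_root]
      · rw [S.hV0, Finset.sum_singleton]
        linarith [F.c1_root]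
    | succ l ih =>
      intro hl1
      have hl : l < S.D := Nat.lt_of_succ_lt hl1
      obtain ⟨ihbin, ihsum⟩ := ih hl
      have hlD1 : l < S.D - 1 := by omega
      have hsucc : S.succ l = S.V (l + 1) ∪ S.C := by
        simp [Skeleton.succ, hlD1]
      have hsub : S.V (l + 1) ⊆ S.succ l := by
        rw [hsucc]; exact Finset.subset_union_left
      have hval : ∀ v ∈ S.V (l + 1),
          F.wp v + F.wm v = ∑ u ∈ S.V l, (F.zp u v + F.zm u v) := by
        intro v hv
        have := F.c1 (l + 1) (by omega) hl1 v hv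
        simpa using this
      -- z vanishes at inactive nodes
      have hzzero : ∀ u ∈ S.V l, F.wp u + F.wm u = 0 →
          ∀ v ∈ S.succ l, F.zp u v = 0 ∧ F.zm u v = 0 := by
        intro u hu h0 v hv
        have hwp : F.wp u = 0 :=
          le_antisymm (by linarith [F.wm_nonneg u]) (F.wp_nonneg u)
        have hwm : F.wm u = 0 := by linarith
        have hp : ∑ v' ∈ S.succ l, F.zp u v' = 0 := by
          rw [← F.c2p l hl u hu]; exact hwp
        have hm : ∑ v' ∈ S.succ l, F.zm u v' = 0 := by
          rw [← F.c2m l hl u hu]; exact hwm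
        exact ⟨(Finset.sum_eq_zero_iff_of_nonneg (fun x _ => F.zp_nonneg u x)).mp hp v hv,
          (Finset.sum_eq_zero_iff_of_nonneg (fun x _ => F.zm_nonneg u x)).mp hm v hv⟩
      -- sum bound for layer l+1
      have hsumnew : ∑ v ∈ S.V (l + 1), (F.wp v + F.wm v) ≤ 1 := by
        calc ∑ v ∈ S.V (l + 1), (F.wp v + F.wm v)
            = ∑ v ∈ S.V (l + 1), ∑ u ∈ S.V l, (F.zp u v + F.zm u v) :=
              Finset.sum_congr rfl hval
          _ = ∑ u ∈ S.V l, ∑ v ∈ S.V (l + 1), (F.zp u v + F.zm u v) := Finset.sum_comm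
          _ ≤ ∑ u ∈ S.V l, ∑ v ∈ S.succ l, (F.zp u v + F.zm u v) := by
              refine Finset.sum_le_sum fun u _ => ?_
              refine Finset.sum_le_sum_of_subset_of_nonneg hsub fun v _ _ => ?_
              have := F.zp_nonneg u v; have := F.zm_nonneg u v; linarith
          _ = ∑ u ∈ S.V l, (F.wp u + F.wm u) := by
              refine Finset.sum_congr rfl fun u hu => ?_
              rw [Finset.sum_add_distrib, ← F.c2p l hl u hu, ← F.c2m l hl u hu]
          _ ≤ 1 := ihsum
      refine ⟨?_, hsumnew⟩
      intro v hv
      have hvsucc : v ∈ S.succ l := hsub hv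
      by_cases hex : ∃ ubar ∈ S.V l, F.wp ubar + F.wm ubar = 1
      · obtain ⟨ub, hub, hub1⟩ := hex
        have hothers : ∀ u ∈ S.V l, u ≠ ub → F.wp u + F.wm u = 0 :=
          uniq (S.V l) _ (fun u _ => by linarith [F.wp_nonneg u, F.wm_nonneg u])
            ihsum ub hub hub1
        have hvval : F.wp v + F.wm v = F.zp ub v + F.zm ub v := by
          rw [hval v hv]
          refine Finset.sum_eq_single_of_mem ub hub fun u hu hne => ?_
          obtain ⟨h1, h2⟩ := hzzero u hu (hothers u hu hne) v hvsucc
          rw [h1, h2]; ring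
        rcases F.lam_bin l hl with hlam | hlam
        · -- lam = 0 : positive flow vanishes on layer l
          have hwp0 : F.wp ub = 0 := by
            have h3 := F.c3p l hl
            rw [hlam] at h3
            have hle : ∑ u ∈ S.V l, F.wp u = 0 :=
              le_antisymm h3 (Finset.sum_nonneg fun u _ => F.wp_nonneg u)
            exact (Finset.sum_eq_zero_iff_of_nonneg
              (fun u _ => F.wp_nonneg u)).mp hle ub hub
          have hwm1 : F.wm ub = 1 := by linarith
          have hzp0 : F.zp ub v = 0 := by
            have hp : ∑ v' ∈ S.succ l, F.zp ub v' = 0 := by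
              rw [← F.c2p l hl ub hub]; exact hwp0
            exact (Finset.sum_eq_zero_iff_of_nonneg
              (fun x _ => F.zp_nonneg ub x)).mp hp v hvsucc
          have hz_sum : ∑ v' ∈ S.succ l, F.zm ub v' = 1 := by
            rw [← F.c2m l hl ub hub]; exact hwm1
          have hy_sum : ∑ v' ∈ S.succ l, F.ym ub v' = F.d ub :=
            (F.c4m l hl ub hub).symm
          have hle1 : (1:ℝ) ≤ F.d ub := by
            rw [← hz_sum, ← hy_sum]
            exact Finset.sum_le_sum fun x hx => F.c5m l hl ub hub x hx
          have hd1 : F.d ub = 1 := by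
            rcases F.d_bin l hl ub hub with h | h
            · linarith
            · exact h
          have heq : ∀ x ∈ S.succ l, F.zm ub x = F.ym ub x := by
            rw [← Finset.sum_eq_sum_iff_of_le fun x hx => F.c5m l hl ub hub x hx]
            rw [hz_sum, hy_sum, hd1]
          rw [hvval, hzp0, heq v hvsucc]
          rcases F.ym_bin l hl ub hub v hvsucc with h | h
          · left; rw [h]; ring
          · right; rw [h]; ring
        · -- lam = 1 : negative flow vanishes on layer l
          have hwm0 : F.wm ub = 0 := by
            have h3 := F.c3m l hl
            rw [hlam] at h3
            have hle : ∑ u ∈ S.V l, F.wm u = 0 :=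
              le_antisymm (by linarith) (Finset.sum_nonneg fun u _ => F.wm_nonneg u)
            exact (Finset.sum_eq_zero_iff_of_nonneg
              (fun u _ => F.wm_nonneg u)).mp hle ub hub
          have hwp1 : F.wp ub = 1 := by linarith
          have hzm0 : F.zm ub v = 0 := by
            have hm : ∑ v' ∈ S.succ l, F.zm ub v' = 0 := by
              rw [← F.c2m l hl ub hub]; exact hwm0
            exact (Finset.sum_eq_zero_iff_of_nonneg
              (fun x _ => F.zm_nonneg ub x)).mp hm v hvsucc
          have hz_sum : ∑ v' ∈ S.succ l, F.zp ub v' = 1 := by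
            rw [← F.c2p l hl ub hub]; exact hwp1
          have hy_sum : ∑ v' ∈ S.succ l, F.yp ub v' = F.d ub :=
            (F.c4p l hl ub hub).symm
          have hle1 : (1:ℝ) ≤ F.d ub := by
            rw [← hz_sum, ← hy_sum]
            exact Finset.sum_le_sum fun x hx => F.c5p l hl ub hub x hx
          have hd1 : F.d ub = 1 := by
            rcases F.d_bin l hl ub hub with h | h
            · linarith
            · exact h
          have heq : ∀ x ∈ S.succ l, F.zp ub x = F.yp ub x := by
            rw [← Finset.sum_eq_sum_iff_of_le fun x hx => F.c5p l hl ub hub x hx]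
            rw [hz_sum, hy_sum, hd1]
          rw [hvval, hzm0, heq v hvsucc]
          rcases F.yp_bin l hl ub hub v hvsucc with h | h
          · left; rw [h]; ring
          · right; rw [h]; ring
      · push_neg at hex
        have hallzero : ∀ u ∈ S.V l, F.wp u + F.wm u = 0 := by
          intro u hu
          rcases ihbin u hu with h | h
          · exact h
          · exact absurd h (hex u hu)
        left
        rw [hval v hv]
        refine Finset.sum_eq_zero fun u hu => ?_
        obtain ⟨h1, h2⟩ := hzzero u hu (hallzero u hu) v hvsucc
        rw [h1, h2]; ring
  intro l hl
  obtain ⟨hbin, hsum⟩ := key l hl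
  refine ⟨hbin, ?_⟩
  intro ubar hub h1 u hu hne
  exact uniq (S.V l) _ (fun u _ => by linarith [F.wp_nonneg u, F.wm_nonneg u])
    hsum ubar hub h1 u hu hne
end

section
/- Unique-successor routing (step of the proof of Theorem 1). For every feasible flow assignment of a layered decision-diagram skeleton and every internal node ū ∈ V^I: if w⁺_ū = 1, then d_ū = 1, there exists a unique successor v̄ ∈ δ⁺(ū) with y⁺_{ūv̄} = 1, and for this v̄ one has z⁺_{ūv̄} = 1 while z⁺_{ūv} = 0 for every v ∈ δ⁺(ū) with v ≠ v̄. Symmetrically, if w⁻_ū = 1, then d_ū = 1, there exists a unique v̄ ∈ δ⁺(ū) with y⁻_{ūv̄} = 1, and z⁻_{ūv̄} = 1 while z⁻_{ūv} = 0 for every v ≠ v̄. -/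
lemma routing_key {Node : Type} [DecidableEq Node] (s : Finset Node)
    (y z : Node → ℝ) (d : ℝ)
    (hbin : ∀ v ∈ s, y v = 0 ∨ y v = 1)
    (hz0 : ∀ v ∈ s, 0 ≤ z v)
    (hzy : ∀ v ∈ s, z v ≤ y v)
    (hd : d = 0 ∨ d = 1)
    (hdy : d = ∑ v ∈ s, y v)
    (hw : ∑ v ∈ s, z v = 1) :
    d = 1 ∧ ∃ vbar ∈ s, y vbar = 1 ∧ (∀ v ∈ s, y v = 1 → v = vbar) ∧
      z vbar = 1 ∧ ∀ v ∈ s, v ≠ vbar → z v = 0 := by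
  have hzy' : (1 : ℝ) ≤ ∑ v ∈ s, y v := hw ▸ Finset.sum_le_sum hzy
  have hd1 : d = 1 := by rcases hd with h | h <;> [skip; exact h]; linarith [hdy ▸ hzy']
  have hsy : ∑ v ∈ s, y v = 1 := by rw [← hdy, hd1]
  have hne : ∃ vbar ∈ s, y vbar ≠ 0 := by
    by_contra h; push_neg at h
    have : ∑ v ∈ s, y v = 0 := Finset.sum_eq_zero h
    linarith
  obtain ⟨vbar, hvs, hvne⟩ := hne
  have hy1 : y vbar = 1 := (hbin vbar hvs).resolve_left hvne
  have herase : ∑ v ∈ s.erase vbar, y v = 0 := by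
    have := Finset.add_sum_erase s y hvs
    rw [hsy, hy1] at this; linarith
  have hy0 : ∀ v ∈ s.erase vbar, y v = 0 := by
    intro v hv
    refine (Finset.sum_eq_zero_iff_of_nonneg ?_).mp herase v hv
    intro u hu
    rcases hbin u (Finset.mem_of_mem_erase hu) with h | h <;> simp [h]
  have hz0' : ∀ v ∈ s, v ≠ vbar → z v = 0 := by
    intro v hv hne
    have h1 := hzy v hv
    have h2 := hz0 v hv
    have := hy0 v (Finset.mem_erase.mpr ⟨hne, hv⟩)
    linarith
  have hzbar : z vbar = 1 := by
    have := Finset.add_sum_erase s z hvs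
    rw [hw] at this
    have : ∑ v ∈ s.erase vbar, z v = 0 :=
      Finset.sum_eq_zero fun v hv =>
        hz0' v (Finset.mem_of_mem_erase hv) (Finset.ne_of_mem_erase hv)
    have h2 := Finset.add_sum_erase s z hvs
    rw [hw, this] at h2; linarith
  refine ⟨hd1, vbar, hvs, hy1, ?_, hzbar, hz0'⟩
  intro v hv hyv
  by_contra hne
  have := hy0 v (Finset.mem_erase.mpr ⟨hne, hv⟩)
  linarith

/-- **Unique-successor routing.** For every feasible flow assignment and every
internal node `ū` (in layer `l < D`): if `w⁺_ū = 1`, then `d_ū = 1`, there is a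
unique successor `v̄ ∈ δ⁺(ū)` with `y⁺_{ūv̄} = 1`, and for this `v̄` one has
`z⁺_{ūv̄} = 1` while `z⁺_{ūv} = 0` for every other successor `v`. Symmetrically
for the negative side. -/
theorem unique_successor_routing {Node : Type} [DecidableEq Node]
    (S : Skeleton Node) (F : FeasibleFlow S) :
    ∀ l, l < S.D → ∀ ubar ∈ S.V l,
      (F.wp ubar = 1 →
        F.d ubar = 1 ∧
        ∃ vbar ∈ S.succ l, F.yp ubar vbar = 1 ∧
          (∀ v ∈ S.succ l, F.yp ubar v = 1 → v = vbar) ∧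
          F.zp ubar vbar = 1 ∧
          (∀ v ∈ S.succ l, v ≠ vbar → F.zp ubar v = 0)) ∧
      (F.wm ubar = 1 →
        F.d ubar = 1 ∧
        ∃ vbar ∈ S.succ l, F.ym ubar vbar = 1 ∧
          (∀ v ∈ S.succ l, F.ym ubar v = 1 → v = vbar) ∧
          F.zm ubar vbar = 1 ∧
          (∀ v ∈ S.succ l, v ≠ vbar → F.zm ubar v = 0)) := by
  intro l hl ubar hu
  constructor
  · intro hw
    exact routing_key (S.succ l) (F.yp ubar) (F.zp ubar) (F.d ubar)
      (F.yp_bin l hl ubar hu) (fun v _ => F.zp_nonneg ubar v)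
      (F.c5p l hl ubar hu) (F.d_bin l hl ubar hu)
      (F.c4p l hl ubar hu) (by rw [← F.c2p l hl ubar hu, hw])
  · intro hw
    exact routing_key (S.succ l) (F.ym ubar) (F.zm ubar) (F.d ubar)
      (F.ym_bin l hl ubar hu) (fun v _ => F.zm_nonneg ubar v)
      (F.c5m l hl ubar hu) (F.d_bin l hl ubar hu)
      (F.c4m l hl ubar hu) (by rw [← F.c2m l hl ubar hu, hw])
end

section
/- Arc-flow product formula (claim in the proof of Theorem 1: z⁺_{uv} = 1 if and only if w⁺_u = 1 and y⁺_{uv} = 1, and z⁺_{uv} = 0 otherwise; the integrality of the z variables is implied by the integrality of the w variables). For every feasible flow assignment of a layered decision-diagram skeleton, every internal node u ∈ V^I, and every successor v ∈ δ⁺(u): z⁺_{uv} = w⁺_u · y⁺_{uv} and z⁻_{uv} = w⁻_u · y⁻_{uv}. -/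
lemma key_s4 {Node : Type} [DecidableEq Node] (s : Finset Node) (y z : Node → ℝ) (w d : ℝ)
    (hy : ∀ v ∈ s, y v = 0 ∨ y v = 1) (hd : d = 0 ∨ d = 1)
    (hsum : d = ∑ v ∈ s, y v) (hw : w = ∑ v ∈ s, z v)
    (hz : ∀ v ∈ s, 0 ≤ z v) (hzy : ∀ v ∈ s, z v ≤ y v) :
    ∀ v ∈ s, z v = w * y v := by
  intro v hv
  have hynn : ∀ v ∈ s, 0 ≤ y v := fun v hv => by rcases hy v hv with h | h <;> simp [h]
  rcases hd with hd | hd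
  · -- all y = 0, all z = 0, w = 0
    have hall : ∀ v' ∈ s, y v' = 0 := by
      rw [hd] at hsum
      exact fun v' hv' => (Finset.sum_eq_zero_iff_of_nonneg hynn).mp hsum.symm v' hv'
    have hzv : z v = 0 := le_antisymm ((hzy v hv).trans_eq (hall v hv)) (hz v hv)
    simp [hzv, hall v hv]
  · rcases hy v hv with hyv | hyv
    · have hzv : z v = 0 := le_antisymm ((hzy v hv).trans_eq hyv) (hz v hv)
      simp [hzv, hyv]
    · -- y v = 1, others 0
      have hrest : ∑ v' ∈ s.erase v, y v' = 0 := by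
        have := Finset.add_sum_erase s y hv
        rw [← hsum, hd, hyv] at this
        linarith
      have hall : ∀ v' ∈ s.erase v, y v' = 0 :=
        (Finset.sum_eq_zero_iff_of_nonneg
          (fun v' hv' => hynn v' (Finset.mem_of_mem_erase hv'))).mp hrest
      have hzall : ∀ v' ∈ s.erase v, z v' = 0 := fun v' hv' =>
        le_antisymm ((hzy v' (Finset.mem_of_mem_erase hv')).trans_eq (hall v' hv'))
          (hz v' (Finset.mem_of_mem_erase hv'))
      have : w = z v := by
        rw [hw, ← Finset.add_sum_erase s z hv, Finset.sum_eq_zero hzall, add_zero]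
      rw [this, hyv, mul_one]

/-- **Arc-flow product formula.** For every feasible flow assignment, every
internal node `u` (in layer `l < D`) and every successor `v ∈ δ⁺(u)`:
`z⁺_{uv} = w⁺_u · y⁺_{uv}` and `z⁻_{uv} = w⁻_u · y⁻_{uv}`. -/
theorem arc_flow_product {Node : Type} [DecidableEq Node]
    (S : Skeleton Node) (F : FeasibleFlow S) :
    ∀ l, l < S.D → ∀ u ∈ S.V l, ∀ v ∈ S.succ l,
      F.zp u v = F.wp u * F.yp u v ∧ F.zm u v = F.wm u * F.ym u v := by
  intro l hl u hu v hv
  constructor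
  · exact key_s4 (S.succ l) (F.yp u) (F.zp u) (F.wp u) (F.d u)
      (F.yp_bin l hl u hu) (F.d_bin l hl u hu) (F.c4p l hl u hu) (F.c2p l hl u hu)
      (fun v' _ => F.zp_nonneg u v') (F.c5p l hl u hu) v hv
  · exact key_s4 (S.succ l) (F.ym u) (F.zm u) (F.wm u) (F.d u)
      (F.ym_bin l hl u hu) (F.d_bin l hl u hu) (F.c4m l hl u hu) (F.c2m l hl u hu)
      (fun v' _ => F.zm_nonneg u v') (F.c5m l hl u hu) v hv
end

section
/- Flow-conservation invariant across layers. For every feasible flow assignment of a layered decision-diagram skeleton and every l ∈ {0, …, D−1}: Σ_{u∈V_l} (w⁺_u + w⁻_u) + Σ_{v∈C} Σ_{l'<l} Σ_{u∈V_{l'}} (z⁺_{uv} + z⁻_{uv}) = 1; that is, the unit of flow emitted at the root is, at each depth, split exactly between the current layer of internal nodes and the flow already absorbed by terminal nodes via long arcs from earlier layers. -/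
/-- **Flow-conservation invariant across layers.** For every feasible flow
assignment and every `l < D`: the flow currently in layer `l` plus the flow
already absorbed by terminal nodes via long arcs from layers `l' < l` equals the
unit of flow emitted at the root. -/
theorem flow_conservation_invariant {Node : Type} [DecidableEq Node]
    (S : Skeleton Node) (F : FeasibleFlow S) :
    ∀ l, l < S.D →
      (∑ u ∈ S.V l, (F.wp u + F.wm u)) +
        (∑ v ∈ S.C, ∑ l' ∈ Finset.range l, ∑ u ∈ S.V l',
          (F.zp u v + F.zm u v)) = 1 := by
  intro l hl
  induction l with
  | zero => simp [S.hV0, F.c1_root]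
  | succ l ih =>
    have hlD : l < S.D := by omega
    have hsucc : S.succ l = S.V (l + 1) ∪ S.C := by
      unfold Skeleton.succ
      rw [if_pos (by omega)]
    have hdisj : Disjoint (S.V (l + 1)) S.C := S.hVC (l + 1) hl
    have key : ∑ u ∈ S.V l, (F.wp u + F.wm u)
        = (∑ v ∈ S.V (l + 1), ∑ u ∈ S.V l, (F.zp u v + F.zm u v))
          + ∑ v ∈ S.C, ∑ u ∈ S.V l, (F.zp u v + F.zm u v) := by
      rw [← Finset.sum_union hdisj, ← hsucc, Finset.sum_comm]
      refine Finset.sum_congr rfl fun u hu => ?_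
      rw [F.c2p l hlD u hu, F.c2m l hlD u hu, Finset.sum_add_distrib]
    have c1' : ∑ v ∈ S.V (l + 1), (F.wp v + F.wm v)
        = ∑ v ∈ S.V (l + 1), ∑ u ∈ S.V l, (F.zp u v + F.zm u v) := by
      refine Finset.sum_congr rfl fun v hv => ?_
      simpa using F.c1 (l + 1) (by omega) hl v hv
    have ih' := ih hlD
    have hsplit : ∑ v ∈ S.C, (∑ l' ∈ Finset.range l, ∑ u ∈ S.V l',
          (F.zp u v + F.zm u v) + ∑ u ∈ S.V l, (F.zp u v + F.zm u v))
        = (∑ v ∈ S.C, ∑ l' ∈ Finset.range l, ∑ u ∈ S.V l', (F.zp u v + F.zm u v))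
          + ∑ v ∈ S.C, ∑ u ∈ S.V l, (F.zp u v + F.zm u v) := Finset.sum_add_distrib
    simp only [Finset.sum_range_succ]
    rw [hsplit, c1']
    linarith
end

section
/- Unique terminal assignment (each sample reaches exactly one terminal node). For every feasible flow assignment of a layered decision-diagram skeleton, define for each terminal node v ∈ C its total inflow w_v = Σ_{u∈V^I} (z⁺_{uv} + z⁻_{uv}). Then Σ_{v∈C} w_v = 1, and there exists a unique terminal node v̄ ∈ C with w_{v̄} = 1, while w_v = 0 for every other terminal node v ∈ C. -/
section UTAaux

variable {Node : Type} [DecidableEq Node] (S : Skeleton Node) (F : FeasibleFlow S)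

lemma UTA_C_subset_succ (l : ℕ) : S.C ⊆ S.succ l := by
  unfold Skeleton.succ
  split
  · exact Finset.subset_union_right
  · exact subset_rfl

lemma UTA_V_subset_succ (l : ℕ) (h : l + 1 < S.D) : S.V (l + 1) ⊆ S.succ l := by
  unfold Skeleton.succ
  rw [if_pos (by omega)]
  exact Finset.subset_union_left

lemma UTA_node_zero (l : ℕ) (hl : l < S.D) (u : Node) (hu : u ∈ S.V l)
    (h : F.wp u + F.wm u = 0) : ∀ v ∈ S.succ l, F.zp u v + F.zm u v = 0 := by
  have hwp : F.wp u = 0 := le_antisymm (by nlinarith [F.wm_nonneg u]) (F.wp_nonneg u)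
  have hwm : F.wm u = 0 := by linarith
  have hp := F.c2p l hl u hu
  have hm := F.c2m l hl u hu
  rw [hwp] at hp; rw [hwm] at hm
  intro v hv
  have h1 : F.zp u v = 0 :=
    (Finset.sum_eq_zero_iff_of_nonneg (fun v _ => F.zp_nonneg u v)).mp hp.symm v hv
  have h2 : F.zm u v = 0 :=
    (Finset.sum_eq_zero_iff_of_nonneg (fun v _ => F.zm_nonneg u v)).mp hm.symm v hv
  linarith

lemma UTA_layers_zero (l : ℕ) (hl : l < S.D)
    (h0 : ∀ u ∈ S.V l, F.wp u + F.wm u = 0) :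
    ∀ l', l ≤ l' → l' < S.D → ∀ x ∈ S.V l', F.wp x + F.wm x = 0 := by
  intro l'
  induction l' with
  | zero =>
    intro h1 _
    have : l = 0 := Nat.le_zero.mp h1
    subst this; exact h0
  | succ n ih =>
    intro h1 h2
    rcases Nat.lt_or_ge l (n + 1) with h | h
    · have hn : n < S.D := by omega
      have hlayer := ih (by omega) hn
      intro x hx
      have hc1 := F.c1 (n + 1) (by omega) h2 x hx
      simp only [Nat.add_sub_cancel] at hc1
      rw [hc1]
      apply Finset.sum_eq_zero
      intro u hu
      exact UTA_node_zero S F n hn u hu (hlayer u hu) x (UTA_V_subset_succ S n h2 hx)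
    · have : l = n + 1 := by omega
      subst this; exact h0

lemma UTA_pick_one (s : Finset Node) (z y : Node → ℝ) (hz : ∀ v, 0 ≤ z v)
    (hzy : ∀ v ∈ s, z v ≤ y v) (hy : ∀ v ∈ s, y v = 0 ∨ y v = 1)
    (hsum : ∑ v ∈ s, z v = 1) (hysum : ∑ v ∈ s, y v ≤ 1) :
    ∃ v₀ ∈ s, z v₀ = 1 ∧ ∀ v ∈ s, v ≠ v₀ → z v = 0 := by
  have hys : ∑ v ∈ s, y v = 1 :=
    le_antisymm hysum (by rw [← hsum]; exact Finset.sum_le_sum hzy)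
  have h0 : ∑ v ∈ s, (y v - z v) = 0 := by
    rw [Finset.sum_sub_distrib, hsum, hys]; ring
  have hzy' : ∀ v ∈ s, z v = y v := by
    intro v hv
    have := (Finset.sum_eq_zero_iff_of_nonneg
      (fun v hv => by linarith [hzy v hv])).mp h0 v hv
    linarith
  obtain ⟨v₀, hv₀s, hv₀⟩ := Finset.exists_ne_zero_of_sum_ne_zero
    (show ∑ v ∈ s, z v ≠ 0 by rw [hsum]; norm_num)
  have hz1 : z v₀ = 1 := by
    rcases hy v₀ hv₀s with h | h
    · exact absurd (by rw [hzy' v₀ hv₀s, h]) hv₀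
    · rw [hzy' v₀ hv₀s, h]
  refine ⟨v₀, hv₀s, hz1, ?_⟩
  intro v hv hne
  have htot := Finset.add_sum_erase s z hv₀s
  have hrest : ∑ v ∈ s.erase v₀, z v = 0 := by
    rw [hsum] at htot; linarith
  exact (Finset.sum_eq_zero_iff_of_nonneg (fun v _ => hz v)).mp hrest v
    (Finset.mem_erase.mpr ⟨hne, hv⟩)

lemma UTA_concentrate (l : ℕ) (hl : l < S.D) (u : Node) (hu : u ∈ S.V l)
    (h1 : F.wp u + F.wm u = 1) :
    ∃ v₀ ∈ S.succ l, F.zp u v₀ + F.zm u v₀ = 1 ∧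
      ∀ v ∈ S.succ l, v ≠ v₀ → F.zp u v + F.zm u v = 0 := by
  have hd : F.d u ≤ 1 := by rcases F.d_bin l hl u hu with h | h <;> simp [h]
  rcases F.lam_bin l hl with hlam | hlam
  · -- λ = 0 : positive flows at this layer are zero
    have hwp0 : F.wp u = 0 := by
      have h3 := F.c3p l hl
      rw [hlam] at h3
      have h4 : F.wp u ≤ ∑ u' ∈ S.V l, F.wp u' :=
        Finset.single_le_sum (fun u' _ => F.wp_nonneg u') hu
      linarith [F.wp_nonneg u]
    have hwm1 : F.wm u = 1 := by linarith
    have hsum : ∑ v ∈ S.succ l, F.zm u v = 1 := by rw [← F.c2m l hl u hu, hwm1]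
    have hysum : ∑ v ∈ S.succ l, F.ym u v ≤ 1 := by rw [← F.c4m l hl u hu]; exact hd
    obtain ⟨v₀, hv₀s, hz1, hz0⟩ := UTA_pick_one (S.succ l) (F.zm u) (F.ym u)
      (F.zm_nonneg u) (F.c5m l hl u hu) (F.ym_bin l hl u hu) hsum hysum
    have hp0 : ∀ v ∈ S.succ l, F.zp u v = 0 := by
      intro v hv
      have hc := F.c2p l hl u hu
      rw [hwp0] at hc
      exact (Finset.sum_eq_zero_iff_of_nonneg (fun v _ => F.zp_nonneg u v)).mp hc.symm v hv
    exact ⟨v₀, hv₀s, by rw [hz1, hp0 v₀ hv₀s]; ring,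
      fun v hv hne => by rw [hz0 v hv hne, hp0 v hv]; ring⟩
  · -- λ = 1 : negative flows at this layer are zero
    have hwm0 : F.wm u = 0 := by
      have h3 := F.c3m l hl
      rw [hlam] at h3
      have h4 : F.wm u ≤ ∑ u' ∈ S.V l, F.wm u' :=
        Finset.single_le_sum (fun u' _ => F.wm_nonneg u') hu
      linarith [F.wm_nonneg u]
    have hwp1 : F.wp u = 1 := by linarith
    have hsum : ∑ v ∈ S.succ l, F.zp u v = 1 := by rw [← F.c2p l hl u hu, hwp1]
    have hysum : ∑ v ∈ S.succ l, F.yp u v ≤ 1 := by rw [← F.c4p l hl u hu]; exact hd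
    obtain ⟨v₀, hv₀s, hz1, hz0⟩ := UTA_pick_one (S.succ l) (F.zp u) (F.yp u)
      (F.zp_nonneg u) (F.c5p l hl u hu) (F.yp_bin l hl u hu) hsum hysum
    have hm0 : ∀ v ∈ S.succ l, F.zm u v = 0 := by
      intro v hv
      have hc := F.c2m l hl u hu
      rw [hwm0] at hc
      exact (Finset.sum_eq_zero_iff_of_nonneg (fun v _ => F.zm_nonneg u v)).mp hc.symm v hv
    exact ⟨v₀, hv₀s, by rw [hz1, hm0 v₀ hv₀s]; ring,
      fun v hv hne => by rw [hz0 v hv hne, hm0 v hv]; ring⟩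

lemma UTA_terminal_case (l : ℕ) (hl : l < S.D) (u : Node) (hu : u ∈ S.V l)
    (hothers : ∀ u' ∈ S.V l, u' ≠ u → F.wp u' + F.wm u' = 0)
    (hinv : ∀ v ∈ S.C, ∀ l' < l, ∑ u' ∈ S.V l', (F.zp u' v + F.zm u' v) = 0)
    (v₀ : Node) (hv₀C : v₀ ∈ S.C)
    (hz1 : F.zp u v₀ + F.zm u v₀ = 1)
    (hz0 : ∀ v ∈ S.succ l, v ≠ v₀ → F.zp u v + F.zm u v = 0) :
    ∃ vbar ∈ S.C,
      (∑ l' ∈ Finset.range S.D, ∑ u' ∈ S.V l', (F.zp u' vbar + F.zm u' vbar)) = 1 ∧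
      ∀ v ∈ S.C, v ≠ vbar →
        (∑ l' ∈ Finset.range S.D, ∑ u' ∈ S.V l', (F.zp u' v + F.zm u' v)) = 0 := by
  have hafter : ∀ l', l < l' → l' < S.D → ∀ x ∈ S.V l', F.wp x + F.wm x = 0 := by
    intro l' hll' hl'
    have hl1 : l + 1 < S.D := by omega
    have hnext : ∀ x ∈ S.V (l + 1), F.wp x + F.wm x = 0 := by
      intro x hx
      have hc1 := F.c1 (l + 1) (by omega) hl1 x hx
      simp only [Nat.add_sub_cancel] at hc1
      rw [hc1]
      apply Finset.sum_eq_zero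
      intro u' hu'
      by_cases h : u' = u
      · subst h
        have hxne : x ≠ v₀ := by
          intro h; subst h
          exact (Finset.disjoint_left.mp (S.hVC (l + 1) hl1)) hx hv₀C
        exact hz0 x (UTA_V_subset_succ S l hl1 hx) hxne
      · exact UTA_node_zero S F l hl u' hu' (hothers u' hu' h) x
          (UTA_V_subset_succ S l hl1 hx)
    exact UTA_layers_zero S F (l + 1) hl1 hnext l' (by omega) hl'
  have hWin : ∀ v ∈ S.C,
      (∑ l' ∈ Finset.range S.D, ∑ u' ∈ S.V l', (F.zp u' v + F.zm u' v))
        = F.zp u v + F.zm u v := by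
    intro v hv
    have inner : ∑ u' ∈ S.V l, (F.zp u' v + F.zm u' v) = F.zp u v + F.zm u v :=
      Finset.sum_eq_single_of_mem u hu (fun u' hu' hne =>
        UTA_node_zero S F l hl u' hu' (hothers u' hu' hne) v (UTA_C_subset_succ S l hv))
    calc (∑ l' ∈ Finset.range S.D, ∑ u' ∈ S.V l', (F.zp u' v + F.zm u' v))
        = ∑ u' ∈ S.V l, (F.zp u' v + F.zm u' v) := by
          apply Finset.sum_eq_single_of_mem l (Finset.mem_range.mpr hl)
          intro l' hl'r hne
          rcases Nat.lt_or_ge l' l with h | h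
          · exact hinv v hv l' h
          · have hlt : l < l' := by omega
            apply Finset.sum_eq_zero
            intro u' hu'
            exact UTA_node_zero S F l' (Finset.mem_range.mp hl'r) u' hu'
              (hafter l' hlt (Finset.mem_range.mp hl'r) u' hu') v
              (UTA_C_subset_succ S l' hv)
      _ = F.zp u v + F.zm u v := inner
  refine ⟨v₀, hv₀C, ?_, ?_⟩
  · rw [hWin v₀ hv₀C]; exact hz1
  · intro v hv hne
    rw [hWin v hv]
    exact hz0 v (UTA_C_subset_succ S l hv) hne

lemma UTA_claim : ∀ k l, l < S.D → S.D ≤ l + k + 1 →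
    (∃ u ∈ S.V l, (F.wp u + F.wm u = 1) ∧
      ∀ u' ∈ S.V l, u' ≠ u → F.wp u' + F.wm u' = 0) →
    (∀ v ∈ S.C, ∀ l' < l, ∑ u' ∈ S.V l', (F.zp u' v + F.zm u' v) = 0) →
    ∃ vbar ∈ S.C,
      (∑ l' ∈ Finset.range S.D, ∑ u' ∈ S.V l', (F.zp u' vbar + F.zm u' vbar)) = 1 ∧
      ∀ v ∈ S.C, v ≠ vbar →
        (∑ l' ∈ Finset.range S.D, ∑ u' ∈ S.V l', (F.zp u' v + F.zm u' v)) = 0 := by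
  intro k
  induction k with
  | zero =>
    rintro l hl hk ⟨u, hu, h1, hothers⟩ hinv
    have hsucc : S.succ l = S.C := by
      unfold Skeleton.succ; rw [if_neg (by omega)]
    obtain ⟨v₀, hv₀, hz1, hz0⟩ := UTA_concentrate S F l hl u hu h1
    rw [hsucc] at hv₀
    exact UTA_terminal_case S F l hl u hu hothers hinv v₀ hv₀ hz1 hz0
  | succ k ih =>
    rintro l hl hk ⟨u, hu, h1, hothers⟩ hinv
    obtain ⟨v₀, hv₀, hz1, hz0⟩ := UTA_concentrate S F l hl u hu h1
    by_cases hv₀C : v₀ ∈ S.C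
    · exact UTA_terminal_case S F l hl u hu hothers hinv v₀ hv₀C hz1 hz0
    · -- v₀ ∈ V (l+1)
      have hl1 : l + 1 < S.D := by
        by_contra h
        have : S.succ l = S.C := by unfold Skeleton.succ; rw [if_neg (by omega)]
        rw [this] at hv₀
        exact hv₀C hv₀
      have hv₀V : v₀ ∈ S.V (l + 1) := by
        have : S.succ l = S.V (l + 1) ∪ S.C := by
          unfold Skeleton.succ; rw [if_pos (by omega)]
        rw [this] at hv₀
        rcases Finset.mem_union.mp hv₀ with h | h
        · exact h
        · exact absurd h hv₀C
      have hWl : ∀ v ∈ S.succ l,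
          ∑ u' ∈ S.V l, (F.zp u' v + F.zm u' v) = F.zp u v + F.zm u v :=
        fun v hv => Finset.sum_eq_single_of_mem u hu (fun u' hu' hne =>
          UTA_node_zero S F l hl u' hu' (hothers u' hu' hne) v hv)
      have hstate : ∃ x ∈ S.V (l + 1), (F.wp x + F.wm x = 1) ∧
          ∀ x' ∈ S.V (l + 1), x' ≠ x → F.wp x' + F.wm x' = 0 := by
        refine ⟨v₀, hv₀V, ?_, ?_⟩
        · have hc1 := F.c1 (l + 1) (by omega) hl1 v₀ hv₀V
          simp only [Nat.add_sub_cancel] at hc1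
          rw [hc1, hWl v₀ hv₀]
          exact hz1
        · intro x hx hne
          have hc1 := F.c1 (l + 1) (by omega) hl1 x hx
          simp only [Nat.add_sub_cancel] at hc1
          rw [hc1, hWl x (UTA_V_subset_succ S l hl1 hx)]
          exact hz0 x (UTA_V_subset_succ S l hl1 hx) hne
      have hinv' : ∀ v ∈ S.C, ∀ l' < l + 1,
          ∑ u' ∈ S.V l', (F.zp u' v + F.zm u' v) = 0 := by
        intro v hv l' hl'
        rcases Nat.lt_or_ge l' l with h | h
        · exact hinv v hv l' h
        · have hx : l' = l := by omega
          rw [hx, hWl v (UTA_C_subset_succ S l hv)]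
          exact hz0 v (UTA_C_subset_succ S l hv)
            (fun h => hv₀C (h ▸ hv))
      exact ih (l + 1) hl1 (by omega) hstate hinv'

end UTAaux

/-- **Unique terminal assignment.** For every feasible flow assignment, defining
the total inflow of each terminal node `v ∈ C` as
`w_v = Σ_{u ∈ V^I} (z⁺_{uv} + z⁻_{uv})`, one has `Σ_{v∈C} w_v = 1`, and there is
a unique terminal node `v̄ ∈ C` with `w_{v̄} = 1` while `w_v = 0` for every other
terminal node. -/
theorem unique_terminal_assignment {Node : Type} [DecidableEq Node]
    (S : Skeleton Node) (F : FeasibleFlow S) :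
    (∑ v ∈ S.C, ∑ l ∈ Finset.range S.D, ∑ u ∈ S.V l,
        (F.zp u v + F.zm u v)) = 1 ∧
    ∃! vbar, vbar ∈ S.C ∧
      (∑ l ∈ Finset.range S.D, ∑ u ∈ S.V l, (F.zp u vbar + F.zm u vbar)) = 1 ∧
      (∀ v ∈ S.C, v ≠ vbar →
        (∑ l ∈ Finset.range S.D, ∑ u ∈ S.V l, (F.zp u v + F.zm u v)) = 0) := by
  have hstate0 : ∃ u ∈ S.V 0, (F.wp u + F.wm u = 1) ∧
      ∀ u' ∈ S.V 0, u' ≠ u → F.wp u' + F.wm u' = 0 := by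
    refine ⟨S.r, by rw [S.hV0]; exact Finset.mem_singleton_self _, F.c1_root, ?_⟩
    intro u' hu' hne
    rw [S.hV0] at hu'
    exact absurd (Finset.mem_singleton.mp hu') hne
  have hinv0 : ∀ v ∈ S.C, ∀ l' < 0,
      ∑ u' ∈ S.V l', (F.zp u' v + F.zm u' v) = 0 := by
    intro v hv l' hl'
    exact absurd hl' (Nat.not_lt_zero l')
  obtain ⟨vbar, hvC, h1, h0⟩ :=
    UTA_claim S F S.D 0 S.hD (by omega) hstate0 hinv0
  constructor
  · exact (Finset.sum_eq_single_of_mem vbar hvC (fun v hv hne => h0 v hv hne)).trans h1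
  · refine ⟨vbar, ⟨hvC, h1, h0⟩, ?_⟩
    rintro y ⟨hyC, hy1, -⟩
    by_contra hne
    have := h0 y hyC hne
    linarith
end

section
/- Unique path decomposition (each sample follows a single path within the decision diagram down to a terminal node). For every feasible flow assignment of a layered decision-diagram skeleton there exist a unique length k ∈ {1, …, D} and a unique sequence of nodes u_0 = r, u_1 ∈ V_1, …, u_{k−1} ∈ V_{k−1}, u_k ∈ C (so u_{j+1} ∈ δ⁺(u_j) for each j) such that z⁺_{u_j u_{j+1}} + z⁻_{u_j u_{j+1}} = 1 for every j ∈ {0, …, k−1}, while z⁺_{uv} = 0 and z⁻_{uv} = 0 for every arc (u, v) with u ∈ V^I, v ∈ δ⁺(u) that is not one of the arcs (u_j, u_{j+1}) of this sequence. -/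
/-- The property that `(u 0, u 1, …, u k)` is the path followed by the sample:
`u 0 = r`, `u j ∈ V j` for `1 ≤ j < k`, `u k ∈ C`, every arc of the path carries
one unit of flow, and every other arc of the skeleton carries no flow. -/
def IsSamplePath {Node : Type} [DecidableEq Node] (S : Skeleton Node)
    (F : FeasibleFlow S) (k : ℕ) (u : ℕ → Node) : Prop :=
  1 ≤ k ∧ k ≤ S.D ∧ u 0 = S.r ∧
  (∀ j, 1 ≤ j → j < k → u j ∈ S.V j) ∧ u k ∈ S.C ∧
  (∀ j, j < k → F.zp (u j) (u (j + 1)) + F.zm (u j) (u (j + 1)) = 1) ∧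
  (∀ l, l < S.D → ∀ a ∈ S.V l, ∀ b ∈ S.succ l,
    (¬ ∃ j, j < k ∧ a = u j ∧ b = u (j + 1)) → F.zp a b = 0 ∧ F.zm a b = 0)
set_option linter.unusedSectionVars false
set_option linter.unusedVariables false
namespace UPD

variable {Node : Type} [DecidableEq Node]

lemma sum_bin_one {s : Finset Node} {f : Node → ℝ}
    (hbin : ∀ v ∈ s, f v = 0 ∨ f v = 1) (hsum : ∑ v ∈ s, f v = 1) :
    ∃ b ∈ s, f b = 1 ∧ ∀ v ∈ s, v ≠ b → f v = 0 := by
  have hnn : ∀ v ∈ s, 0 ≤ f v := fun v hv => by rcases hbin v hv with h | h <;> simp [h]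
  have hex : ∃ b ∈ s, f b ≠ 0 := by
    by_contra h
    push_neg at h
    rw [Finset.sum_eq_zero h] at hsum; norm_num at hsum
  obtain ⟨b, hb, hfb⟩ := hex
  have hfb1 : f b = 1 := (hbin b hb).resolve_left hfb
  refine ⟨b, hb, hfb1, ?_⟩
  have hadd := Finset.add_sum_erase s f hb
  have hrest : ∑ v ∈ s.erase b, f v = 0 := by linarith
  intro v hv hvb
  exact (Finset.sum_eq_zero_iff_of_nonneg
    (fun x hx => hnn x (Finset.mem_of_mem_erase hx))).mp hrest v
    (Finset.mem_erase.mpr ⟨hvb, hv⟩)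

lemma sum_eq_of_le {s : Finset Node} {f g : Node → ℝ}
    (hle : ∀ v ∈ s, f v ≤ g v) (hsum : ∑ v ∈ s, f v = ∑ v ∈ s, g v) :
    ∀ v ∈ s, f v = g v := by
  have h0 : ∑ v ∈ s, (g v - f v) = 0 := by rw [Finset.sum_sub_distrib]; linarith
  intro v hv
  have := (Finset.sum_eq_zero_iff_of_nonneg
    (fun x hx => sub_nonneg.mpr (hle x hx))).mp h0 v hv
  linarith

lemma node_zero (S : Skeleton Node) (F : FeasibleFlow S) {l : ℕ} (hl : l < S.D)
    {a : Node} (ha : a ∈ S.V l) (hp : F.wp a = 0) (hm : F.wm a = 0) :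
    ∀ v ∈ S.succ l, F.zp a v = 0 ∧ F.zm a v = 0 := by
  intro v hv
  have hsp : ∑ v ∈ S.succ l, F.zp a v = 0 := by rw [← F.c2p l hl a ha]; exact hp
  have hsm : ∑ v ∈ S.succ l, F.zm a v = 0 := by rw [← F.c2m l hl a ha]; exact hm
  exact ⟨(Finset.sum_eq_zero_iff_of_nonneg (fun x _ => F.zp_nonneg a x)).mp hsp v hv,
    (Finset.sum_eq_zero_iff_of_nonneg (fun x _ => F.zm_nonneg a x)).mp hsm v hv⟩

lemma choose_arc {s : Finset Node} {z y : Node → ℝ} {dval : ℝ}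
    (hznn : ∀ v, 0 ≤ z v)
    (hzy : ∀ v ∈ s, z v ≤ y v)
    (hybin : ∀ v ∈ s, y v = 0 ∨ y v = 1)
    (hzsum : ∑ v ∈ s, z v = 1)
    (hysum : ∑ v ∈ s, y v = dval)
    (hdbin : dval = 0 ∨ dval = 1) :
    ∃ b ∈ s, z b = 1 ∧ ∀ v ∈ s, v ≠ b → z v = 0 := by
  have h1 : (1:ℝ) ≤ dval := by
    calc (1:ℝ) = ∑ v ∈ s, z v := hzsum.symm
    _ ≤ ∑ v ∈ s, y v := Finset.sum_le_sum hzy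
    _ = dval := hysum
  have hd1 : dval = 1 := by rcases hdbin with h | h <;> linarith
  have hzeqy : ∀ v ∈ s, z v = y v :=
    sum_eq_of_le hzy (by rw [hzsum, hysum, hd1])
  have hzbin : ∀ v ∈ s, z v = 0 ∨ z v = 1 := fun v hv => (hzeqy v hv) ▸ hybin v hv
  exact sum_bin_one hzbin hzsum

lemma step (S : Skeleton Node) (F : FeasibleFlow S) {l : ℕ} (hl : l < S.D)
    {a : Node} (ha : a ∈ S.V l) (hfa : F.wp a + F.wm a = 1) :
    ∃ b, b ∈ S.succ l ∧ (F.zp a b + F.zm a b = 1) ∧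
      ∀ v ∈ S.succ l, v ≠ b → F.zp a v = 0 ∧ F.zm a v = 0 := by
  rcases F.lam_bin l hl with h0 | h1
  · -- lam l = 0 : all wp on layer are 0
    have hwp0 : F.wp a = 0 := by
      have hs := F.c3p l hl
      rw [h0] at hs
      have hz : ∑ u ∈ S.V l, F.wp u = 0 :=
        le_antisymm hs (Finset.sum_nonneg fun u _ => F.wp_nonneg u)
      exact (Finset.sum_eq_zero_iff_of_nonneg (fun u _ => F.wp_nonneg u)).mp hz a ha
    have hwm1 : F.wm a = 1 := by linarith
    have hzp0 : ∀ v ∈ S.succ l, F.zp a v = 0 := by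
      have hz : ∑ v ∈ S.succ l, F.zp a v = 0 := by rw [← F.c2p l hl a ha]; exact hwp0
      exact fun v hv =>
        (Finset.sum_eq_zero_iff_of_nonneg (fun x _ => F.zp_nonneg a x)).mp hz v hv
    have hzsum : ∑ v ∈ S.succ l, F.zm a v = 1 := by rw [← F.c2m l hl a ha]; exact hwm1
    obtain ⟨b, hb, hzb, hrest⟩ := choose_arc (F.zm_nonneg a)
      (fun v hv => F.c5m l hl a ha v hv) (fun v hv => F.ym_bin l hl a ha v hv)
      hzsum (F.c4m l hl a ha).symm (F.d_bin l hl a ha)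
    exact ⟨b, hb, by rw [hzp0 b hb, hzb]; ring,
      fun v hv hvb => ⟨hzp0 v hv, hrest v hv hvb⟩⟩
  · -- lam l = 1 : all wm on layer are 0
    have hwm0 : F.wm a = 0 := by
      have hs := F.c3m l hl
      rw [h1] at hs
      have hz : ∑ u ∈ S.V l, F.wm u = 0 :=
        le_antisymm (by linarith) (Finset.sum_nonneg fun u _ => F.wm_nonneg u)
      exact (Finset.sum_eq_zero_iff_of_nonneg (fun u _ => F.wm_nonneg u)).mp hz a ha
    have hwp1 : F.wp a = 1 := by linarith
    have hzm0 : ∀ v ∈ S.succ l, F.zm a v = 0 := by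
      have hz : ∑ v ∈ S.succ l, F.zm a v = 0 := by rw [← F.c2m l hl a ha]; exact hwm0
      exact fun v hv =>
        (Finset.sum_eq_zero_iff_of_nonneg (fun x _ => F.zm_nonneg a x)).mp hz v hv
    have hzsum : ∑ v ∈ S.succ l, F.zp a v = 1 := by rw [← F.c2p l hl a ha]; exact hwp1
    obtain ⟨b, hb, hzb, hrest⟩ := choose_arc (F.zp_nonneg a)
      (fun v hv => F.c5p l hl a ha v hv) (fun v hv => F.yp_bin l hl a ha v hv)
      hzsum (F.c4p l hl a ha).symm (F.d_bin l hl a ha)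
    exact ⟨b, hb, by rw [hzm0 b hb, hzb]; ring,
      fun v hv hvb => ⟨hrest v hv hvb, hzm0 v hv⟩⟩

noncomputable def nxt (S : Skeleton Node) (F : FeasibleFlow S) (l : ℕ) (a : Node) : Node :=
  if h : ∃ b, b ∈ S.succ l ∧ (F.zp a b + F.zm a b = 1) ∧
      ∀ v ∈ S.succ l, v ≠ b → F.zp a v = 0 ∧ F.zm a v = 0
  then h.choose else S.r

noncomputable def seq (S : Skeleton Node) (F : FeasibleFlow S) : ℕ → Node
  | 0 => S.r
  | j + 1 => nxt S F j (seq S F j)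

lemma nxt_spec (S : Skeleton Node) (F : FeasibleFlow S) {l : ℕ} {a : Node}
    (h : ∃ b, b ∈ S.succ l ∧ (F.zp a b + F.zm a b = 1) ∧
      ∀ v ∈ S.succ l, v ≠ b → F.zp a v = 0 ∧ F.zm a v = 0) :
    nxt S F l a ∈ S.succ l ∧ (F.zp a (nxt S F l a) + F.zm a (nxt S F l a) = 1) ∧
      ∀ v ∈ S.succ l, v ≠ nxt S F l a → F.zp a v = 0 ∧ F.zm a v = 0 := by
  rw [nxt, dif_pos h]
  exact h.choose_spec

def Active (S : Skeleton Node) (F : FeasibleFlow S) (j : ℕ) : Prop :=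
  j < S.D ∧ seq S F j ∈ S.V j ∧ (F.wp (seq S F j) + F.wm (seq S F j) = 1) ∧
  ∀ v ∈ S.V j, v ≠ seq S F j → F.wp v = 0 ∧ F.wm v = 0

lemma seq_succ_spec (S : Skeleton Node) (F : FeasibleFlow S) {j : ℕ}
    (hA : Active S F j) :
    seq S F (j+1) ∈ S.succ j ∧
    (F.zp (seq S F j) (seq S F (j+1)) + F.zm (seq S F j) (seq S F (j+1)) = 1) ∧
    ∀ v ∈ S.succ j, v ≠ seq S F (j+1) →
      F.zp (seq S F j) v = 0 ∧ F.zm (seq S F j) v = 0 := by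
  have h := step S F hA.1 hA.2.1 hA.2.2.1
  show nxt S F j (seq S F j) ∈ _ ∧ _
  exact nxt_spec S F h

lemma main (S : Skeleton Node) (F : FeasibleFlow S) :
    ∀ j, j ≤ S.D →
    (∃ i, 1 ≤ i ∧ i ≤ j ∧ seq S F i ∈ S.C) ∨ Active S F j := by
  intro j
  induction j with
  | zero =>
    intro _
    right
    have hr : seq S F 0 = S.r := rfl
    refine ⟨S.hD, ?_, ?_, ?_⟩
    · rw [hr, S.hV0]; exact Finset.mem_singleton_self _
    · rw [hr]; exact F.c1_root
    · intro v hv hvne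
      rw [S.hV0, Finset.mem_singleton] at hv
      rw [hr] at hvne
      exact absurd hv hvne
  | succ j ih =>
    intro hj1
    rcases ih (by omega) with ⟨i, h1, h2, h3⟩ | hA
    · exact Or.inl ⟨i, h1, by omega, h3⟩
    · obtain ⟨hmem, harc, hzero⟩ := seq_succ_spec S F hA
      by_cases hC : seq S F (j+1) ∈ S.C
      · exact Or.inl ⟨j+1, by omega, le_refl _, hC⟩
      · right
        have hjlt : j < S.D - 1 := by
          by_contra h
          rw [Skeleton.succ, if_neg h] at hmem
          exact hC hmem
        have hj1D : j + 1 < S.D := by omega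
        have hmem' : seq S F (j+1) ∈ S.V (j+1) := by
          rw [Skeleton.succ, if_pos hjlt] at hmem
          rcases Finset.mem_union.mp hmem with h | h
          · exact h
          · exact absurd h hC
        have hsingle : ∀ b ∈ S.succ j,
            ∑ u ∈ S.V j, (F.zp u b + F.zm u b) = F.zp (seq S F j) b + F.zm (seq S F j) b := by
          intro b hb
          apply Finset.sum_eq_single_of_mem _ hA.2.1
          intro u hu hune
          obtain ⟨hp, hm⟩ := hA.2.2.2 u hu hune
          obtain ⟨e1, e2⟩ := node_zero S F hA.1 hu hp hm b hb
          rw [e1, e2]; ring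
        refine ⟨hj1D, hmem', ?_, ?_⟩
        · have hc1 := F.c1 (j+1) (by omega) hj1D _ hmem'
          simp only [Nat.add_sub_cancel] at hc1
          rw [hc1, hsingle _ hmem, harc]
        · intro v hv hvne
          have hvsucc : v ∈ S.succ j := by
            rw [Skeleton.succ, if_pos hjlt]; exact Finset.mem_union_left _ hv
          have hc1 := F.c1 (j+1) (by omega) hj1D v hv
          simp only [Nat.add_sub_cancel] at hc1
          obtain ⟨e1, e2⟩ := hzero v hvsucc hvne
          have h0 : F.wp v + F.wm v = 0 := by
            rw [hc1, hsingle v hvsucc, e1, e2]; ring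
          constructor <;> linarith [F.wp_nonneg v, F.wm_nonneg v]

end UPD


/-- **Unique path decomposition.** For every feasible flow assignment there
exist a unique length `k ∈ {1, …, D}` and a unique sequence
`u 0 = r, u 1 ∈ V 1, …, u (k-1) ∈ V (k-1), u k ∈ C` such that
`z⁺ + z⁻ = 1` on every arc of the sequence and `z⁺ = z⁻ = 0` on every other arc. -/
theorem unique_path_decomposition {Node : Type} [DecidableEq Node]
    (S : Skeleton Node) (F : FeasibleFlow S) :
    (∃ k : ℕ, ∃ u : ℕ → Node, IsSamplePath S F k u) ∧
    (∀ k k' : ℕ, ∀ u u' : ℕ → Node,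
      IsSamplePath S F k u → IsSamplePath S F k' u' →
      k = k' ∧ ∀ j, j ≤ k → u j = u' j) := by
  classical
  constructor
  · -- existence
    have hterm : ∃ i, 1 ≤ i ∧ i ≤ S.D ∧ UPD.seq S F i ∈ S.C := by
      rcases UPD.main S F S.D le_rfl with h | hA
      · exact h
      · exact absurd hA.1 (lt_irrefl _)
    set k := Nat.find hterm with hkdef
    obtain ⟨hk1, hkD, hkC⟩ := Nat.find_spec hterm
    have hactive : ∀ j, j < k → UPD.Active S F j := by
      intro j hj
      rcases UPD.main S F j (by omega) with ⟨i, hi1, hij, hiC⟩ | hA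
      · exact absurd hiC (fun h =>
          (Nat.find_min hterm (show i < k by omega)) ⟨hi1, by omega, h⟩)
      · exact hA
    have hdead : ∀ l, k ≤ l → l < S.D → ∀ v ∈ S.V l, F.wp v = 0 ∧ F.wm v = 0 := by
      intro l
      induction l with
      | zero => intro h0 _ _ _; omega
      | succ l ih =>
        intro hkl hlD v hv
        have hl : l < S.D := by omega
        have hlsub : l < S.D - 1 := by omega
        have hvsucc : v ∈ S.succ l := by
          rw [Skeleton.succ, if_pos hlsub]; exact Finset.mem_union_left _ hv
        have hzero : ∀ u ∈ S.V l, F.zp u v + F.zm u v = 0 := by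
          intro u hu
          rcases Nat.lt_or_ge l k with hlk | hlk
          · have hA := hactive l hlk
            by_cases hueq : u = UPD.seq S F l
            · have hkeq : k = l + 1 := by omega
              have hvne : v ≠ UPD.seq S F (l+1) := by
                intro he
                have hmemC : UPD.seq S F (l+1) ∈ S.C := hkeq ▸ hkC
                exact Finset.disjoint_left.mp (S.hVC (l+1) hlD) (he ▸ hv) hmemC
              obtain ⟨_, _, hz⟩ := UPD.seq_succ_spec S F hA
              obtain ⟨e1, e2⟩ := hz v hvsucc hvne
              rw [hueq, e1, e2]; ring
            · obtain ⟨hp, hm⟩ := hA.2.2.2 u hu hueq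
              obtain ⟨e1, e2⟩ := UPD.node_zero S F hl hu hp hm v hvsucc
              rw [e1, e2]; ring
          · obtain ⟨hp, hm⟩ := ih hlk hl u hu
            obtain ⟨e1, e2⟩ := UPD.node_zero S F hl hu hp hm v hvsucc
            rw [e1, e2]; ring
        have hc1 := F.c1 (l+1) (by omega) hlD v hv
        simp only [Nat.add_sub_cancel] at hc1
        have h0 : F.wp v + F.wm v = 0 := by rw [hc1]; exact Finset.sum_eq_zero hzero
        constructor <;> linarith [F.wp_nonneg v, F.wm_nonneg v]
    refine ⟨k, UPD.seq S F, hk1, hkD, rfl, ?_, hkC, ?_, ?_⟩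
    · intro j _ hjk; exact (hactive j hjk).2.1
    · intro j hjk; exact (UPD.seq_succ_spec S F (hactive j hjk)).2.1
    · intro l hlD a ha b hb hnot
      rcases Nat.lt_or_ge l k with hlk | hlk
      · have hA := hactive l hlk
        by_cases haeq : a = UPD.seq S F l
        · have hbne : b ≠ UPD.seq S F (l+1) := fun he => hnot ⟨l, hlk, haeq, he⟩
          rw [haeq]
          exact (UPD.seq_succ_spec S F hA).2.2 b hb hbne
        · obtain ⟨hp, hm⟩ := hA.2.2.2 a ha haeq
          exact UPD.node_zero S F hlD ha hp hm b hb
      · obtain ⟨hp, hm⟩ := hdead l hlk hlD a ha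
        exact UPD.node_zero S F hlD ha hp hm b hb
  · -- uniqueness
    intro k k' u u' h h'
    obtain ⟨hk1, hkD, hu0, humem, huC, harc, hzero⟩ := h
    obtain ⟨hk1', hkD', hu0', humem', huC', harc', hzero'⟩ := h'
    have hmem : ∀ i, i < k → u i ∈ S.V i := by
      intro i hi
      rcases Nat.eq_zero_or_pos i with h0 | h1
      · subst h0; rw [hu0, S.hV0]; exact Finset.mem_singleton_self _
      · exact humem i h1 hi
    have hmem' : ∀ i, i < k' → u' i ∈ S.V i := by
      intro i hi
      rcases Nat.eq_zero_or_pos i with h0 | h1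
      · subst h0; rw [hu0', S.hV0]; exact Finset.mem_singleton_self _
      · exact humem' i h1 hi
    have hne : ∀ i j, i < j → j ≤ k → u i ≠ u j := by
      intro i j hij hjk heq
      have hui : u i ∈ S.V i := hmem i (by omega)
      rcases eq_or_lt_of_le hjk with he | hlt
      · subst he
        exact Finset.disjoint_left.mp (S.hVC i (by omega)) hui (heq ▸ huC)
      · exact Finset.disjoint_left.mp
          (S.hVdisj i j (by omega) (by omega) (by omega)) hui (heq ▸ hmem j hlt)
    have key : ∀ j, j < k → j < k' → u j = u' j → u (j+1) = u' (j+1) := by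
      intro j hjk hjk' heq
      have harcj := harc' j hjk'
      have haj : u' j ∈ S.V j := hmem' j hjk'
      have hbj : u' (j+1) ∈ S.succ j := by
        rcases lt_or_eq_of_le (Nat.succ_le_of_lt hjk') with hlt | he2
        · rw [Skeleton.succ, if_pos (show j < S.D - 1 by omega)]
          exact Finset.mem_union_left _ (hmem' (j+1) hlt)
        · have hC' : u' (j+1) ∈ S.C := by rw [show j+1 = k' from he2]; exact huC'
          rw [Skeleton.succ]
          split
          · exact Finset.mem_union_right _ hC'
          · exact hC'
      by_cases hex : ∃ i, i < k ∧ u' j = u i ∧ u' (j+1) = u (i+1)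
      · obtain ⟨i, hik, h1, h2⟩ := hex
        have hij : i = j := by
          by_contra hij
          rcases Nat.lt_or_ge i j with hlt | hge
          · exact hne i j hlt (by omega) (h1 ▸ heq).symm
          · exact hne j i (by omega) (by omega) (heq.trans h1)
        rw [hij] at h2
        exact h2.symm
      · obtain ⟨hz1, hz2⟩ := hzero j (by omega) (u' j) haj (u' (j+1)) hbj hex
        rw [hz1, hz2] at harcj
        norm_num at harcj
    have keyle : ∀ j, j ≤ k → j ≤ k' → u j = u' j := by
      intro j
      induction j with
      | zero => intro _ _; rw [hu0, hu0']
      | succ j ih =>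
        intro h1 h2
        exact key j (by omega) (by omega) (ih (by omega) (by omega))
    have hkk' : k = k' := by
      by_contra hne2
      rcases Nat.lt_or_ge k k' with hlt | hge
      · have h1 : u' k ∈ S.V k := humem' k hk1 hlt
        have h3 : u k = u' k := keyle k le_rfl (by omega)
        exact Finset.disjoint_left.mp (S.hVC k (by omega)) h1 (h3 ▸ huC)
      · have hlt : k' < k := by omega
        have h1 : u k' ∈ S.V k' := humem k' hk1' hlt
        have h3 : u k' = u' k' := keyle k' (by omega) le_rfl
        exact Finset.disjoint_left.mp (S.hVC k' (by omega)) h1 (h3 ▸ huC')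
    exact ⟨hkk', fun j hj => keyle j hj (by omega)⟩
end
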